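/- Let Δ < k be positive integers, let A ⊆ [k] with |A| = Δ, and let B ⊆ [k] with |B| ≤ Δ. Sample independently: a uniformly random enumeration σ = (σ(1),…,σ(Δ)) of A, a color c₁ uniform on [k] ∖ A, and a Bernoulli event 'accept' with success probability (k − Δ)/(k − |B|). Output c₁ if c₁ ∉ B and 'accept' occurs; otherwise output the first color in the sequence σ that does not lie in B (when A ∖ B = ∅ this branch occurs with probability 0, and the output there may be fixed arbitrarily). Then the output is uniformly distributed on [k] ∖ B. -/

import Mathlib

open Finset
open scoped ENNReal

section CompressAux

variable {k : ℕ}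

/-- The fallback output: first color of the list not in `B`, defaulting to `d`. -/
private def Ffun (B : Finset (Fin k)) (d : Fin k) (l : List (Fin k)) : Fin k :=
  (l.find? (fun c => decide (c ∉ B))).getD d

private lemma find_isSome {A B : Finset (Fin k)} {l : List (Fin k)}
    (hl : l.toFinset = A) (hs : (A \ B).Nonempty) :
    (l.find? (fun c => decide (c ∉ B))).isSome := by
  obtain ⟨x, hx⟩ := hs
  rw [mem_sdiff] at hx
  rw [List.find?_isSome]
  exact ⟨x, by rw [← List.mem_toFinset, hl]; exact hx.1, by simpa using hx.2⟩

private lemma Ffun_mem {A B : Finset (Fin k)} {l : List (Fin k)} (d : Fin k)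
    (hl : l.toFinset = A) (hs : (A \ B).Nonempty) :
    Ffun B d l ∈ A \ B := by
  obtain ⟨c₀, hc₀⟩ := Option.isSome_iff_exists.mp (find_isSome hl hs)
  have h1 := List.find?_some hc₀
  have h2 := List.mem_of_find?_eq_some hc₀
  rw [Ffun, hc₀]
  simp only [Option.getD_some]
  rw [mem_sdiff, ← hl]
  exact ⟨List.mem_toFinset.mpr h2, by simpa using h1⟩

private lemma image_swap_eq {A : Finset (Fin k)} {x y : Fin k}
    (hx : x ∈ A) (hy : y ∈ A) : A.image (Equiv.swap x y) = A := by
  apply Finset.eq_of_subset_of_card_le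
  · intro c hc
    rw [Finset.mem_image] at hc
    obtain ⟨a, ha, rfl⟩ := hc
    rcases eq_or_ne a x with rfl | hax
    · rwa [Equiv.swap_apply_left]
    rcases eq_or_ne a y with rfl | hay
    · rwa [Equiv.swap_apply_right]
    · rwa [Equiv.swap_apply_of_ne_of_ne hax hay]
  · rw [Finset.card_image_of_injective _ (Equiv.injective _)]

private lemma count_const {A B : Finset (Fin k)} (d : Fin k)
    {Perms : Finset (List (Fin k))}
    (hPerms : ∀ l : List (Fin k), l ∈ Perms ↔ l.Nodup ∧ l.toFinset = A)
    {x y : Fin k} (hx : x ∈ A \ B) (hy : y ∈ A \ B) :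
    (Perms.filter fun l => Ffun B d l = x).card
      = (Perms.filter fun l => Ffun B d l = y).card := by
  classical
  have hxA := (mem_sdiff.mp hx).1
  have hxB := (mem_sdiff.mp hx).2
  have hyA := (mem_sdiff.mp hy).1
  have hyB := (mem_sdiff.mp hy).2
  have hs : (A \ B).Nonempty := ⟨x, hx⟩
  set g : Fin k → Fin k := ⇑(Equiv.swap x y) with hg
  have hpred : ∀ c : Fin k, decide (g c ∉ B) = decide (c ∉ B) := by
    intro c
    rcases eq_or_ne c x with rfl | hcx
    · simp [hg, Equiv.swap_apply_left, hxB, hyB]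
    rcases eq_or_ne c y with rfl | hcy
    · simp [hg, Equiv.swap_apply_right, hxB, hyB]
    · simp [hg, Equiv.swap_apply_of_ne_of_ne hcx hcy]
  have hmemP : ∀ l ∈ Perms, l.map g ∈ Perms := by
    intro l hl
    rw [hPerms] at hl ⊢
    constructor
    · exact hl.1.map (Equiv.injective _)
    · have h : (l.map g).toFinset = l.toFinset.image g := by
        ext c; simp [List.mem_map]
      rw [h, hl.2, hg, image_swap_eq hxA hyA]
  have hFmap : ∀ l ∈ Perms, Ffun B d (l.map g) = g (Ffun B d l) := by
    intro l hl
    rw [hPerms] at hl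
    obtain ⟨c₀, hc₀⟩ := Option.isSome_iff_exists.mp
      (find_isSome (B := B) hl.2 hs)
    have hcomp : (fun c => decide (c ∉ B)) ∘ g = fun c => decide (c ∉ B) := by
      funext c; exact hpred c
    rw [Ffun, Ffun, List.find?_map, hcomp, hc₀]
    simp
  have hgg : ∀ l : List (Fin k), (l.map g).map g = l := by
    intro l
    rw [List.map_map]
    have h : g ∘ g = id := by funext c; simp [hg, Equiv.swap_apply_self]
    rw [h, List.map_id]
  refine Finset.card_bij' (fun l _ => l.map g) (fun l _ => l.map g) ?_ ?_ ?_ ?_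
  · intro l hl
    rw [Finset.mem_filter] at hl ⊢
    refine ⟨hmemP l hl.1, ?_⟩
    rw [hFmap l hl.1, hl.2, hg, Equiv.swap_apply_left]
  · intro l hl
    rw [Finset.mem_filter] at hl ⊢
    refine ⟨hmemP l hl.1, ?_⟩
    rw [hFmap l hl.1, hl.2, hg, Equiv.swap_apply_right]
  · intro l _; exact hgg l
  · intro l _; exact hgg l

/-- The key counting lemma: `|A \ B| * #{σ : first σ ∉ B = x} = |Perms|`. -/
private lemma count_mul {A B : Finset (Fin k)} (d : Fin k)
    {Perms : Finset (List (Fin k))}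
    (hPerms : ∀ l : List (Fin k), l ∈ Perms ↔ l.Nodup ∧ l.toFinset = A)
    {x : Fin k} (hx : x ∈ A \ B) :
    (A \ B).card * (Perms.filter fun l => Ffun B d l = x).card = Perms.card := by
  classical
  have hs : (A \ B).Nonempty := ⟨x, hx⟩
  have hfib : Perms.card = ∑ b ∈ A \ B, (Perms.filter fun l => Ffun B d l = b).card :=
    Finset.card_eq_sum_card_fiberwise (fun l hl => Ffun_mem d ((hPerms l).mp hl).2 hs)
  rw [hfib, Finset.sum_congr rfl
    (fun b hb => count_const d hPerms hb hx), Finset.sum_const, smul_eq_mul]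

end CompressAux

/-- Distributional correctness of the Compress update: with `A ⊆ [k]`, `|A| = Δ`,
`|B| ≤ Δ`, sampling a uniformly random enumeration `σ` of `A`, a color `c₁`
uniform outside `A`, and an independent acceptance event of probability
`(k − Δ)/(k − |B|)`, then outputting `c₁` if `c₁ ∉ B` and acceptance occurs, and
otherwise the first color of `σ` not in `B` (arbitrary, say `d`, if none exists),
yields a uniformly random color outside `B`. -/
theorem compress_update_uniform (k Δ : ℕ) (hΔ : 1 ≤ Δ) (hk : Δ < k)
    (A B : Finset (Fin k)) (hA : A.card = Δ) (hB : B.card ≤ Δ)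
    (Perms : Finset (List (Fin k)))
    (hPerms : ∀ l : List (Fin k), l ∈ Perms ↔ l.Nodup ∧ l.toFinset = A)
    (hPne : Perms.Nonempty)
    (h1 : (Finset.univ \ A).Nonempty) (h2 : (Finset.univ \ B).Nonempty)
    (d : Fin k)
    (p : ℝ≥0∞) (hp1 : p ≤ 1)
    (hp : p = (((k : ℝ≥0∞) - (Δ : ℝ≥0∞)) / ((k : ℝ≥0∞) - (B.card : ℝ≥0∞)))) :
    ((PMF.uniformOfFinset Perms hPne).bind fun σ =>
        (PMF.uniformOfFinset (Finset.univ \ A) h1).bind fun c₁ =>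
          (PMF.bernoulli p.toNNReal (by simpa using ENNReal.toNNReal_mono ENNReal.one_ne_top hp1)).map fun accept =>
            if c₁ ∉ B ∧ accept = true then c₁
            else (σ.find? (fun c => decide (c ∉ B))).getD d)
      = PMF.uniformOfFinset (Finset.univ \ B) h2 := by
  classical
  set m := B.card with hm
  set K := k - m with hK
  set D := k - Δ with hD
  set s := (A \ B).card with hsdef
  set t := (B \ A).card with htdef
  set N := Perms.card with hN
  have hmk : m < k := lt_of_le_of_lt hB hk
  have hKpos : 0 < K := Nat.sub_pos_of_lt hmk
  have hDpos : 0 < D := Nat.sub_pos_of_lt hk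
  have hNpos : 0 < N := Finset.card_pos.mpr hPne
  have hKne : (K : ℝ≥0∞) ≠ 0 := by exact_mod_cast hKpos.ne'
  have hKnt : (K : ℝ≥0∞) ≠ ∞ := ENNReal.natCast_ne_top K
  have hDne : (D : ℝ≥0∞) ≠ 0 := by exact_mod_cast hDpos.ne'
  have hDnt : (D : ℝ≥0∞) ≠ ∞ := ENNReal.natCast_ne_top D
  have hNne : (N : ℝ≥0∞) ≠ 0 := by exact_mod_cast hNpos.ne'
  have hNnt : (N : ℝ≥0∞) ≠ ∞ := ENNReal.natCast_ne_top N
  have hpDK : p = (D : ℝ≥0∞) / (K : ℝ≥0∞) := by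
    rw [hp, hD, hK]
    rw [ENNReal.natCast_sub, ENNReal.natCast_sub]
  set e := Δ - m with he
  have hDeK : D + e = K := by omega
  have hone : (D : ℝ≥0∞) / K + (e : ℝ≥0∞) / K = 1 := by
    rw [ENNReal.div_add_div_same,
      show ((D : ℝ≥0∞) + e) = (K : ℝ≥0∞) by exact_mod_cast congrArg (Nat.cast (R := ℝ≥0∞)) hDeK]
    exact ENNReal.div_self hKne hKnt
  have hpnt : p ≠ ∞ := ne_top_of_le_ne_top ENNReal.one_ne_top hp1
  have hsubp : 1 - p = (e : ℝ≥0∞) / K := by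
    refine (ENNReal.eq_sub_of_add_eq hpnt ?_).symm
    rw [hpDK, add_comm]
    exact hone
  have hst : s + m = t + Δ := by
    have h1' := Finset.card_sdiff_add_card_inter A B
    have h2' := Finset.card_sdiff_add_card_inter B A
    rw [Finset.inter_comm B A] at h2'
    omega
  have hste : e + t = s := by omega
  have hcardA : (Finset.univ \ A).card = D := by
    rw [Finset.card_sdiff_of_subset (Finset.subset_univ A), Finset.card_univ, Fintype.card_fin, hA]
  have hcardB : (Finset.univ \ B).card = K := by
    rw [Finset.card_sdiff_of_subset (Finset.subset_univ B), Finset.card_univ, Fintype.card_fin]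
  have hcardBA : ((Finset.univ \ A).filter (fun c => c ∈ B)).card = t := by
    rw [htdef]
    congr 1
    ext c
    simp [Finset.mem_sdiff, Finset.mem_filter, and_comm]
  apply PMF.ext
  intro x
  -- value of the inner bind for a fixed list σ
  have inner_eq : ∀ σ : List (Fin k),
      ((PMF.uniformOfFinset (Finset.univ \ A) h1).bind fun c₁ =>
          (PMF.bernoulli p.toNNReal (by simpa using ENNReal.toNNReal_mono ENNReal.one_ne_top hp1)).map fun accept =>
            if c₁ ∉ B ∧ accept = true then c₁
            else (σ.find? (fun c => decide (c ∉ B))).getD d) x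
        = (D : ℝ≥0∞)⁻¹ * p * (if x ∈ Finset.univ \ A ∧ x ∉ B then 1 else 0)
          + ((D : ℝ≥0∞) * (1 - p) + (t : ℝ≥0∞) * p) * (D : ℝ≥0∞)⁻¹
            * (if Ffun B d σ = x then 1 else 0) := by
    intro σ
    rw [PMF.bind_apply, tsum_fintype]
    have hterm : ∀ c₁ : Fin k,
        (PMF.uniformOfFinset (Finset.univ \ A) h1) c₁ *
          ((PMF.bernoulli p.toNNReal (by simpa using ENNReal.toNNReal_mono ENNReal.one_ne_top hp1)).map fun accept =>
            if c₁ ∉ B ∧ accept = true then c₁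
            else (σ.find? (fun c => decide (c ∉ B))).getD d) x
        = if c₁ ∈ Finset.univ \ A then
            (D : ℝ≥0∞)⁻¹ * ((if Ffun B d σ = x then 1 - p else 0)
              + (if (if c₁ ∉ B then c₁ else Ffun B d σ) = x then p else 0)) else 0 := by
      intro c₁
      rw [PMF.map_apply, tsum_bool, PMF.uniformOfFinset_apply, hcardA]
      by_cases hc₁ : c₁ ∈ Finset.univ \ A
      · rw [if_pos hc₁, if_pos hc₁]
        congr 1
        congr 1
        · erw [PMF.bernoulli_apply]; simp [Ffun, eq_comm, PMF.bernoulli_apply, ENNReal.coe_toNNReal hpnt, ENNReal.coe_sub]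
        · by_cases hc : c₁ ∈ B <;> erw [PMF.bernoulli_apply] <;> simp [hc, Ffun, eq_comm, PMF.bernoulli_apply, ENNReal.coe_toNNReal hpnt, ENNReal.coe_sub]
      · rw [if_neg hc₁, if_neg hc₁, zero_mul]
    rw [Finset.sum_congr rfl fun c₁ _ => hterm c₁]
    rw [Finset.sum_ite_mem, Finset.univ_inter, ← Finset.mul_sum,
      Finset.sum_add_distrib, Finset.sum_const, hcardA]
    rw [← Finset.sum_filter_add_sum_filter_not (Finset.univ \ A) (fun c₁ => c₁ ∈ B)]
    have hsum1 : ∑ c₁ ∈ (Finset.univ \ A).filter (fun c => c ∈ B),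
        (if (if c₁ ∉ B then c₁ else Ffun B d σ) = x then p else 0)
        = (t : ℝ≥0∞) * (if Ffun B d σ = x then p else 0) := by
      have step : ∀ c₁ ∈ (Finset.univ \ A).filter (fun c => c ∈ B),
          (if (if c₁ ∉ B then c₁ else Ffun B d σ) = x then p else 0)
            = (if Ffun B d σ = x then p else 0) := by
        intro c₁ hc₁
        rw [Finset.mem_filter] at hc₁
        simp [hc₁.2]
      rw [Finset.sum_congr rfl step, Finset.sum_const, hcardBA, nsmul_eq_mul]
    have hsum2 : ∑ c₁ ∈ (Finset.univ \ A).filter (fun c => ¬ c ∈ B),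
        (if (if c₁ ∉ B then c₁ else Ffun B d σ) = x then p else 0)
        = if x ∈ Finset.univ \ A ∧ x ∉ B then p else 0 := by
      have step : ∀ c₁ ∈ (Finset.univ \ A).filter (fun c => ¬ c ∈ B),
          (if (if c₁ ∉ B then c₁ else Ffun B d σ) = x then p else 0)
            = (if c₁ = x then p else 0) := by
        intro c₁ hc₁
        rw [Finset.mem_filter] at hc₁
        simp [hc₁.2]
      rw [Finset.sum_congr rfl step, Finset.sum_ite_eq']
      simp [Finset.mem_filter, and_assoc]
    rw [hsum1, hsum2]
    by_cases hF : Ffun B d σ = x <;> by_cases hx : x ∈ Finset.univ \ A ∧ x ∉ B <;>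
      simp [hF, hx, nsmul_eq_mul] <;> (try split_ifs) <;> (try ring) <;> simp
  -- now the outer sum over σ
  rw [PMF.bind_apply]
  rw [tsum_eq_sum (s := Perms) (fun σ hσ => by
    rw [PMF.uniformOfFinset_apply_of_notMem hPne hσ, zero_mul])]
  rw [Finset.sum_congr rfl (fun σ hσ => by
    rw [PMF.uniformOfFinset_apply, if_pos hσ, inner_eq σ])]
  rw [← Finset.mul_sum, Finset.sum_add_distrib, Finset.sum_const]
  have hsumF : ∑ σ ∈ Perms, (((D : ℝ≥0∞) * (1 - p) + (t : ℝ≥0∞) * p) * (D : ℝ≥0∞)⁻¹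
      * (if Ffun B d σ = x then 1 else 0))
      = ((D : ℝ≥0∞) * (1 - p) + (t : ℝ≥0∞) * p) * (D : ℝ≥0∞)⁻¹
        * ((Perms.filter fun l => Ffun B d l = x).card : ℝ≥0∞) := by
    rw [← Finset.mul_sum, Finset.sum_boole]
  rw [hsumF]
  -- the coefficient equals s / K
  have hq : ((D : ℝ≥0∞) * (1 - p) + (t : ℝ≥0∞) * p) * (D : ℝ≥0∞)⁻¹
      = (s : ℝ≥0∞) / (K : ℝ≥0∞) := by
    rw [hsubp, hpDK]
    have h : (D : ℝ≥0∞) * ((e : ℝ≥0∞) / K) + (t : ℝ≥0∞) * ((D : ℝ≥0∞) / K)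
        = (D : ℝ≥0∞) * (s : ℝ≥0∞) / K := by
      rw [← mul_div_assoc, ← mul_div_assoc, ENNReal.div_add_div_same]
      congr 1
      rw [show ((s : ℕ) : ℝ≥0∞) = ((e : ℝ≥0∞) + (t : ℝ≥0∞)) by exact_mod_cast
        (congrArg (Nat.cast (R := ℝ≥0∞)) hste).symm]
      ring
    rw [h, div_eq_mul_inv, div_eq_mul_inv]
    calc (D : ℝ≥0∞) * s * (K : ℝ≥0∞)⁻¹ * (D : ℝ≥0∞)⁻¹
        = ((D : ℝ≥0∞) * (D : ℝ≥0∞)⁻¹) * ((s : ℝ≥0∞) * (K : ℝ≥0∞)⁻¹) := by ring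
      _ = (s : ℝ≥0∞) * (K : ℝ≥0∞)⁻¹ := by rw [ENNReal.mul_inv_cancel hDne hDnt, one_mul]
  rw [hq]
  rw [PMF.uniformOfFinset_apply, hcardB]
  set c : ℕ := (Perms.filter fun l => Ffun B d l = x).card with hc
  -- helper: if x ∉ A \ B and A \ B is nonempty then c = 0
  have hczero : (A \ B).Nonempty → x ∉ A \ B → c = 0 := by
    intro hne hxAB
    rw [hc, Finset.card_eq_zero, Finset.filter_eq_empty_iff]
    intro l hl hFl
    exact hxAB (hFl ▸ Ffun_mem d ((hPerms l).mp hl).2 hne)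
  by_cases hxB : x ∈ B
  · -- output never lands in B
    have hx1 : ¬ (x ∈ Finset.univ \ A ∧ x ∉ B) := fun h => h.2 hxB
    rw [if_neg hx1, if_neg (by simp [hxB])]
    have hterm2 : (s : ℝ≥0∞) / K * (c : ℝ≥0∞) = 0 := by
      rcases Nat.eq_zero_or_pos s with hs0 | hspos
      · rw [hs0, Nat.cast_zero, ENNReal.zero_div, zero_mul]
      · have : c = 0 := hczero (Finset.card_pos.mp hspos)
          (fun hxx => (Finset.mem_sdiff.mp hxx).2 hxB)
        rw [this, Nat.cast_zero, mul_zero]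
    rw [hterm2]
    simp
  · by_cases hxA : x ∈ A
    · -- x ∈ A \ B : only the fallback contributes
      have hxAB : x ∈ A \ B := Finset.mem_sdiff.mpr ⟨hxA, hxB⟩
      have hx1 : ¬ (x ∈ Finset.univ \ A ∧ x ∉ B) := fun h =>
        (Finset.mem_sdiff.mp h.1).2 hxA
      rw [if_neg hx1, if_pos (Finset.mem_sdiff.mpr ⟨Finset.mem_univ x, hxB⟩)]
      have hsc : s * c = N := count_mul d hPerms hxAB
      have hscE : (s : ℝ≥0∞) * (c : ℝ≥0∞) = (N : ℝ≥0∞) := by exact_mod_cast hsc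
      simp only [mul_zero, smul_zero, zero_add]
      rw [div_eq_mul_inv]
      calc (N : ℝ≥0∞)⁻¹ * ((s : ℝ≥0∞) * (K : ℝ≥0∞)⁻¹ * (c : ℝ≥0∞))
          = ((s : ℝ≥0∞) * (c : ℝ≥0∞)) * (N : ℝ≥0∞)⁻¹ * (K : ℝ≥0∞)⁻¹ := by ring
        _ = (K : ℝ≥0∞)⁻¹ := by
            rw [hscE, ENNReal.mul_inv_cancel hNne hNnt, one_mul]
    · -- x outside A ∪ B : only the fresh color contributes
      have hx1 : (x ∈ Finset.univ \ A ∧ x ∉ B) :=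
        ⟨Finset.mem_sdiff.mpr ⟨Finset.mem_univ x, hxA⟩, hxB⟩
      rw [if_pos hx1, if_pos (Finset.mem_sdiff.mpr ⟨Finset.mem_univ x, hxB⟩)]
      have hterm2 : (s : ℝ≥0∞) / K * (c : ℝ≥0∞) = 0 := by
        rcases Nat.eq_zero_or_pos s with hs0 | hspos
        · rw [hs0, Nat.cast_zero, ENNReal.zero_div, zero_mul]
        · have : c = 0 := hczero (Finset.card_pos.mp hspos)
            (fun hxx => hxA (Finset.mem_sdiff.mp hxx).1)
          rw [this, Nat.cast_zero, mul_zero]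
      rw [hterm2, add_zero]
      simp only [mul_one]
      rw [hpDK, div_eq_mul_inv]
      calc (N : ℝ≥0∞)⁻¹ * ((N : ℕ) • ((D : ℝ≥0∞)⁻¹ * ((D : ℝ≥0∞) * (K : ℝ≥0∞)⁻¹)))
          = ((N : ℝ≥0∞) * (N : ℝ≥0∞)⁻¹) * ((D : ℝ≥0∞) * (D : ℝ≥0∞)⁻¹) * (K : ℝ≥0∞)⁻¹ := by
            rw [nsmul_eq_mul]; ring
        _ = (K : ℝ≥0∞)⁻¹ := by
            rw [ENNReal.mul_inv_cancel hNne hNnt, ENNReal.mul_inv_cancel hDne hDnt, one_mul,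
              one_mul]
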